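/- arXiv:0906.1541 — 2 statements merged into one kernel-verified Lean document; each statement's English description precedes it below -/
import Mathlib

section
/- Let d ≥ 1, R ≥ 1, and let φ : [1,∞) → (0,∞) be a decreasing function. Let A ⊂ ℝ^d be an affine subspace with 1 ≤ a = dim A ≤ d. For an integer T ≥ 1 let ζ_T^{(R)} denote the number of integer points z = (z_0,z_1,…,z_d) ∈ ℤ^{d+1} with z_0 = T, max_{1≤j≤d}|z_j| ≤ RT, and dist_∞(z,𝔄) ≤ φ(RT). Then there exists a constant C > 0, depending only on d, A, R and φ(1), such that ζ_T^{(R)} ≤ C·T^a for every integer T ≥ 1. -/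
set_option maxHeartbeats 1000000


/-- The lift `w ↦ (1, w)` from `ℝ^d` to `ℝ^{d+1}`. -/
noncomputable def lift1 {d : ℕ} (w : Fin d → ℝ) : Fin (d+1) → ℝ := Fin.cons 1 w

/-- The linear span of `{(1,w) : w ∈ A}` for an affine subspace `A ⊆ ℝ^d`. -/
noncomputable def spanLift {d : ℕ} (A : AffineSubspace ℝ (Fin d → ℝ)) :
    Submodule ℝ (Fin (d+1) → ℝ) :=
  Submodule.span ℝ (lift1 '' (A : Set (Fin d → ℝ)))

/-- The set of integer points counted by `ζ_T^{(R)}`. -/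
noncomputable def ZSet {d : ℕ} (A : AffineSubspace ℝ (Fin d → ℝ))
    (φ : ℝ → ℝ) (R : ℝ) (T : ℕ) : Set (Fin (d+1) → ℤ) :=
  {z | z 0 = (T : ℤ) ∧ (∀ j : Fin d, |((z j.succ : ℤ) : ℝ)| ≤ R * T) ∧
    Metric.infDist (fun i => (z i : ℝ)) (spanLift A : Set (Fin (d+1) → ℝ)) ≤ φ (R * T)}

/-- Coordinate selection: an `a`-dimensional subspace of `ℝ^d` admits `a` coordinates on which
the projection is injective. -/
lemma exists_good_coords {d a : ℕ} (V : Submodule ℝ (Fin d → ℝ))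
    (hV : Module.finrank ℝ V = a) :
    ∃ ι : Fin a → Fin d, ∀ v : V, (∀ k, (v : Fin d → ℝ) (ι k) = 0) → v = 0 := by
  classical
  set g : Fin d → Module.Dual ℝ V := fun i => (LinearMap.proj i).comp V.subtype with hg
  have hspan : Submodule.span ℝ (Set.range g) = ⊤ := by
    have hann : (Submodule.span ℝ (Set.range g)).dualAnnihilator = ⊥ := by
      rw [eq_bot_iff]
      intro Φ hΦ
      rw [Submodule.mem_dualAnnihilator] at hΦ
      obtain ⟨v, rfl⟩ := (Module.evalEquiv ℝ V).surjective Φ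
      have hv : v = 0 := by
        have hcoords : ∀ i, (v : Fin d → ℝ) i = 0 := by
          intro i
          have h := hΦ (g i) (Submodule.subset_span (Set.mem_range_self i))
          simpa [hg, Module.evalEquiv_apply, Module.Dual.eval_apply] using h
        exact Subtype.ext (funext hcoords)
      simp [hv]
    exact Subspace.dualAnnihilator_inj.mp
      (hann.trans Submodule.dualAnnihilator_top.symm)
  obtain ⟨b, hb_sub, hb_span, hb_li⟩ := exists_linearIndependent ℝ (Set.range g)
  rw [hspan] at hb_span
  let B : Module.Basis b ℝ (Module.Dual ℝ V) := Module.Basis.mk hb_li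
    (by rw [Subtype.range_coe]; exact hb_span.ge)
  haveI : Fintype b := FiniteDimensional.fintypeBasisIndex B
  have hcard : Fintype.card b = a := by
    rw [← Module.finrank_eq_card_basis B, Subspace.dual_finrank_eq, hV]
  let e : Fin a ≃ b := (Fintype.equivFinOfCardEq hcard).symm
  have hsel : ∀ k : Fin a, ∃ i : Fin d, g i = ((e k : b) : Module.Dual ℝ V) :=
    fun k => hb_sub (e k).2
  choose ι hι using hsel
  refine ⟨ι, fun v hv => ?_⟩
  have hb0 : ∀ f ∈ b, f v = 0 := by
    intro f hf
    have hfe : f = ((e (e.symm ⟨f, hf⟩) : b) : Module.Dual ℝ V) := by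
      rw [Equiv.apply_symm_apply]
    rw [hfe, ← hι (e.symm ⟨f, hf⟩)]
    exact hv _
  have hall : ∀ f : Module.Dual ℝ V, f v = 0 := by
    intro f
    have hf : f ∈ Submodule.span ℝ b := by rw [hb_span]; trivial
    refine Submodule.span_induction (fun f hf => hb0 f hf) (by simp)
      (fun f₁ f₂ _ _ h1 h2 => by simp [LinearMap.add_apply, h1, h2])
      (fun c f _ h => by simp [LinearMap.smul_apply, h]) hf
  exact (Module.forall_dual_apply_eq_zero_iff ℝ v).mp hall

/-- Structure of elements of `spanLift A`. -/
lemma spanLift_le {d : ℕ} (A : AffineSubspace ℝ (Fin d → ℝ)) {p : Fin d → ℝ} (hp : p ∈ A) :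
    ∀ y ∈ spanLift A, (fun j : Fin d => y j.succ - y 0 * p j) ∈ A.direction := by
  classical
  let Lm : (Fin (d+1) → ℝ) →ₗ[ℝ] (Fin d → ℝ) :=
    LinearMap.pi fun j : Fin d =>
      (LinearMap.proj j.succ : (Fin (d+1) → ℝ) →ₗ[ℝ] ℝ) - p j • LinearMap.proj 0
  have h : spanLift A ≤ A.direction.comap Lm := by
    rw [spanLift, Submodule.span_le]
    rintro x ⟨w, hw, rfl⟩
    have hLw : Lm (lift1 w) = w - p := by
      funext j
      simp only [Lm, lift1, LinearMap.pi_apply, LinearMap.sub_apply, LinearMap.smul_apply,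
        LinearMap.proj_apply, Fin.cons_succ, Fin.cons_zero, smul_eq_mul, Pi.sub_apply]
      ring
    have hmem : w - p ∈ A.direction := by
      have := A.vsub_mem_direction hw hp
      simpa using this
    simp only [SetLike.mem_coe, Submodule.mem_comap, hLw]
    exact hmem
  intro y hy
  have hm := h hy
  rw [Submodule.mem_comap] at hm
  have hLy : Lm y = fun j : Fin d => y j.succ - y 0 * p j := by
    funext j
    simp only [Lm, LinearMap.pi_apply, LinearMap.sub_apply, LinearMap.smul_apply,
      LinearMap.proj_apply, smul_eq_mul]
    ring
  rwa [hLy] at hm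

theorem zeta_upper_bound
    (d a : ℕ) (hd : 1 ≤ d) (R : ℝ) (hR : 1 ≤ R)
    (φ : ℝ → ℝ)
    (hφpos : ∀ T, 1 ≤ T → 0 < φ T)
    (hφanti : ∀ T₁ T₂, 1 ≤ T₁ → T₁ ≤ T₂ → φ T₂ ≤ φ T₁)
    (A : AffineSubspace ℝ (Fin d → ℝ))
    (ha : Module.finrank ℝ A.direction = a)
    (ha1 : 1 ≤ a) (had : a ≤ d) :
    ∃ C > (0:ℝ), ∀ T : ℕ, 1 ≤ T →
      (ZSet A φ R T).Finite ∧
      (Nat.card (ZSet A φ R T) : ℝ) ≤ C * (T : ℝ) ^ a := by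
  classical
  -- `A` is nonempty
  have hAne : (A : Set (Fin d → ℝ)).Nonempty := by
    rcases (A : Set (Fin d → ℝ)).eq_empty_or_nonempty with h | h
    · exfalso
      have hbot : A.direction = ⊥ := by
        rw [A.direction_eq_vectorSpan, h, vectorSpan_empty]
      rw [hbot] at ha
      simp only [finrank_bot] at ha
      omega
    · exact h
  obtain ⟨p, hp⟩ := hAne
  obtain ⟨ι, hι⟩ := exists_good_coords A.direction ha
  -- the coordinate projection, as a linear map on the direction
  let L : A.direction →ₗ[ℝ] (Fin a → ℝ) :=
    LinearMap.pi fun k => (LinearMap.proj (ι k)).comp A.direction.subtype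
  have hker : LinearMap.ker L = ⊥ := by
    rw [eq_bot_iff]
    intro v hv
    rw [LinearMap.mem_ker] at hv
    rw [Submodule.mem_bot]
    refine hι v fun k => ?_
    exact congrFun hv k
  obtain ⟨K, hK0, hanti⟩ := L.exists_antilipschitzWith hker
  have hKnorm : ∀ v : A.direction, ‖(v : Fin d → ℝ)‖ ≤ (K : ℝ) * ‖L v‖ := by
    intro v
    have h := hanti.le_mul_dist v 0
    simpa [dist_zero_right, map_zero] using h
  have hKpos : (0:ℝ) < K := hK0
  -- the constants
  set δ₁ : ℝ := φ 1 + 1 with hδ₁def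
  have hδ₁ : 0 < δ₁ := by have := hφpos 1 le_rfl; linarith
  set δ₂ : ℝ := 2*δ₁*‖p‖ + 2*δ₁ with hδ₂def
  have hδ₂ : 0 < δ₂ := by have := norm_nonneg p; nlinarith
  set M : ℝ := δ₂ + K*δ₂ with hMdef
  have hM : 0 < M := by nlinarith
  set Mz : ℕ := ⌈M⌉₊ with hMzdef
  set n : ℕ := (2*Mz+1)^(d+1) with hndef
  have hn : 0 < n := by positivity
  refine ⟨(n:ℝ) * (5*R)^a, by positivity, ?_⟩
  intro T hT
  have hT1 : (1:ℝ) ≤ (T:ℝ) := by exact_mod_cast hT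
  have hRT1 : (1:ℝ) ≤ R * T := by nlinarith
  have hφRT : φ (R * T) ≤ φ 1 := hφanti 1 (R*T) le_rfl hRT1
  -- finiteness
  set N : ℕ := max T ⌈R * (T:ℝ)⌉₊ with hN
  have hsub : ZSet A φ R T ⊆ ↑(Fintype.piFinset fun _ : Fin (d+1) =>
      Finset.Icc (-(N:ℤ)) N) := by
    intro z hz
    obtain ⟨hz0, hzb, -⟩ := hz
    rw [Finset.mem_coe, Fintype.mem_piFinset]
    intro i
    rw [Finset.mem_Icc]
    induction i using Fin.cases with
    | zero =>
      have hTN : (T:ℤ) ≤ (N:ℤ) := by exact_mod_cast le_max_left T ⌈R * (T:ℝ)⌉₊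
      have hT0 : (0:ℤ) ≤ (T:ℤ) := by positivity
      rw [hz0]
      omega
    | succ j =>
      have h1 : |((z j.succ : ℤ) : ℝ)| ≤ R * T := hzb j
      have h2 : (R * T : ℝ) ≤ (N : ℝ) := by
        refine le_trans (Nat.le_ceil _) ?_
        exact_mod_cast le_max_right T ⌈R * (T:ℝ)⌉₊
      have h3 : |z j.succ| ≤ (N:ℤ) := by exact_mod_cast le_trans h1 h2
      exact abs_le.mp h3
  have hfin : (ZSet A φ R T).Finite :=
    Set.Finite.subset (Finset.finite_toSet _) hsub
  refine ⟨hfin, ?_⟩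
  set s : Finset (Fin (d+1) → ℤ) := hfin.toFinset with hs
  have hmem_s : ∀ z, z ∈ s ↔ z ∈ ZSet A φ R T := by
    intro z; rw [hs, Set.Finite.mem_toFinset]
  have hcards : Nat.card (ZSet A φ R T) = s.card := by
    rw [Nat.card_coe_set_eq, Set.ncard_eq_toFinset_card _ hfin]
  -- decomposition of points of ZSet
  have hdecomp : ∀ z ∈ ZSet A φ R T, ∃ t : ℝ, ∃ v : Fin d → ℝ, v ∈ A.direction ∧
      |(T:ℝ) - t| ≤ δ₁ ∧
      ∀ j : Fin d, |((z j.succ : ℤ):ℝ) - (t * p j + v j)| ≤ δ₁ := by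
    intro z hz
    obtain ⟨hz0, hzb, hzd⟩ := hz
    have hne : (spanLift A : Set (Fin (d+1) → ℝ)).Nonempty := ⟨0, Submodule.zero_mem _⟩
    have hlt : Metric.infDist (fun i => ((z i : ℤ):ℝ)) (spanLift A : Set _) < δ₁ :=
      lt_of_le_of_lt (le_trans hzd hφRT) (by rw [hδ₁def]; linarith)
    obtain ⟨y, hy, hxy⟩ := (Metric.infDist_lt_iff hne).mp hlt
    have hcoord : ∀ i, |((z i : ℤ):ℝ) - y i| < δ₁ := by
      intro i
      have h := dist_le_pi_dist (fun i => ((z i : ℤ):ℝ)) y i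
      rw [Real.dist_eq] at h
      exact lt_of_le_of_lt h hxy
    refine ⟨y 0, fun j => y j.succ - y 0 * p j, spanLift_le A hp y hy, ?_, ?_⟩
    · have h := hcoord 0
      rw [hz0] at h
      have : ((T:ℤ):ℝ) = (T:ℝ) := by push_cast; ring
      rw [this] at h
      exact le_of_lt h
    · intro j
      have h := hcoord j.succ
      have heq : ((z j.succ : ℤ):ℝ) - (y 0 * p j + (y j.succ - y 0 * p j))
          = ((z j.succ : ℤ):ℝ) - y j.succ := by ring
      rw [heq]
      exact le_of_lt h
  -- the fiber bound
  have hfiber_claim : ∀ z ∈ ZSet A φ R T, ∀ z' ∈ ZSet A φ R T,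
      (∀ k, z (ι k).succ = z' (ι k).succ) → ∀ i, |z i - z' i| ≤ (Mz : ℤ) := by
    intro z hz z' hz' hzz i
    obtain ⟨t, v, hv, ht, he⟩ := hdecomp z hz
    obtain ⟨t', v', hv', ht', he'⟩ := hdecomp z' hz'
    have htT := abs_le.mp ht
    have ht'T := abs_le.mp ht'
    have htt : |t - t'| ≤ 2 * δ₁ := by
      rw [abs_le]; constructor <;> linarith
    -- bound the selected coordinates of v - v'
    have hw : ∀ k, |v (ι k) - v' (ι k)| ≤ δ₂ := by
      intro k
      have h1 := abs_le.mp (he' (ι k))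
      have h2 := abs_le.mp (he (ι k))
      have h3 : ((z (ι k).succ : ℤ):ℝ) = ((z' (ι k).succ : ℤ):ℝ) := by
        exact_mod_cast congrArg (fun m : ℤ => (m:ℝ)) (hzz k)
      have hpk : |p (ι k)| ≤ ‖p‖ := by
        have := norm_le_pi_norm p (ι k)
        simpa [Real.norm_eq_abs] using this
      have h4 : |(t - t') * p (ι k)| ≤ 2*δ₁*‖p‖ := by
        rw [abs_mul]
        exact mul_le_mul htt hpk (abs_nonneg _) (by linarith)
      have h4' := abs_le.mp h4
      have key : v (ι k) - v' (ι k) =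
          (((z' (ι k).succ : ℤ):ℝ) - (t' * p (ι k) + v' (ι k)))
          - (((z (ι k).succ : ℤ):ℝ) - (t * p (ι k) + v (ι k)))
          - (t - t') * p (ι k) := by
        rw [← h3]; ring
      rw [key, hδ₂def, abs_le]
      constructor <;> linarith
    -- bound v - v' everywhere using the antilipschitz constant
    have hvv : ∀ j, |v j - v' j| ≤ K * δ₂ := by
      intro j
      set w : A.direction := ⟨v, hv⟩ - ⟨v', hv'⟩ with hwdef
      have hwc : (w : Fin d → ℝ) = v - v' := by
        rw [hwdef, Submodule.coe_sub]
      have hLw : ‖L w‖ ≤ δ₂ := by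
        rw [pi_norm_le_iff_of_nonneg (le_of_lt hδ₂)]
        intro k
        have hLk : L w k = (w : Fin d → ℝ) (ι k) := by
          simp only [L, LinearMap.pi_apply, LinearMap.comp_apply, Submodule.subtype_apply,
            LinearMap.proj_apply]
        rw [hLk, hwc, Pi.sub_apply, Real.norm_eq_abs]
        exact hw k
      have h5 : ‖(w : Fin d → ℝ)‖ ≤ K * δ₂ := by
        refine le_trans (hKnorm w) ?_
        exact mul_le_mul_of_nonneg_left hLw (le_of_lt hKpos)
      have h6 : |v j - v' j| ≤ ‖(w : Fin d → ℝ)‖ := by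
        rw [hwc]
        have := norm_le_pi_norm (v - v') j
        simpa [Real.norm_eq_abs] using this
      linarith
    -- conclude coordinatewise
    have hreal : |((z i : ℤ):ℝ) - ((z' i : ℤ):ℝ)| ≤ M := by
      induction i using Fin.cases with
      | zero =>
        rw [hz.1, hz'.1]
        simpa using le_of_lt hM
      | succ j =>
        have h1 := abs_le.mp (he j)
        have h2 := abs_le.mp (he' j)
        have hpj : |p j| ≤ ‖p‖ := by
          have := norm_le_pi_norm p j
          simpa [Real.norm_eq_abs] using this
        have h4 : |(t - t') * p j| ≤ 2*δ₁*‖p‖ := by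
          rw [abs_mul]
          exact mul_le_mul htt hpj (abs_nonneg _) (by linarith)
        have h4' := abs_le.mp h4
        have h5' := abs_le.mp (hvv j)
        have key : ((z j.succ : ℤ):ℝ) - ((z' j.succ : ℤ):ℝ) =
            (((z j.succ : ℤ):ℝ) - (t * p j + v j))
            - (((z' j.succ : ℤ):ℝ) - (t' * p j + v' j))
            + (t - t') * p j + (v j - v' j) := by ring
        rw [key, hMdef, abs_le]
        constructor <;> linarith
    have hMle : M ≤ (Mz : ℝ) := Nat.le_ceil M
    have : |((z i - z' i : ℤ) : ℝ)| ≤ (Mz:ℝ) := by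
      push_cast
      push_cast at hreal
      linarith [hreal]
    exact_mod_cast this
  -- counting
  set f : (Fin (d+1) → ℤ) → (Fin a → ℤ) := fun z k => z (ι k).succ with hf
  set NR : ℕ := ⌈R * (T:ℝ)⌉₊ with hNRdef
  have himg : s.image f ⊆ Fintype.piFinset fun _ : Fin a => Finset.Icc (-(NR:ℤ)) NR := by
    intro b hb
    obtain ⟨z, hzs, rfl⟩ := Finset.mem_image.mp hb
    have hz : z ∈ ZSet A φ R T := (hmem_s z).mp hzs
    rw [Fintype.mem_piFinset]
    intro k
    rw [Finset.mem_Icc]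
    have h1 := hz.2.1 (ι k)
    have h2 : (R*T:ℝ) ≤ NR := Nat.le_ceil _
    have h3 : |z (ι k).succ| ≤ (NR:ℤ) := by exact_mod_cast le_trans h1 h2
    exact abs_le.mp h3
  have hcard_img : (s.image f).card ≤ (2*NR+1)^a := by
    refine le_trans (Finset.card_le_card himg) ?_
    rw [Fintype.card_piFinset]
    simp only [Int.card_Icc]
    have hc : ((NR:ℤ) + 1 - -(NR:ℤ)).toNat = 2*NR+1 := by omega
    rw [hc, Finset.prod_const, Finset.card_univ, Fintype.card_fin]
  have hfib : ∀ b ∈ s.image f, (s.filter fun z => f z = b).card ≤ n := by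
    intro b hb
    obtain ⟨z₀, hz₀s, hz₀b⟩ := Finset.mem_image.mp hb
    have hz₀ : z₀ ∈ ZSet A φ R T := (hmem_s z₀).mp hz₀s
    have hsubf : (s.filter fun z => f z = b) ⊆
        Fintype.piFinset fun i => Finset.Icc (z₀ i - Mz) (z₀ i + Mz) := by
      intro z hzf
      obtain ⟨hzs, hzb⟩ := Finset.mem_filter.mp hzf
      have hz : z ∈ ZSet A φ R T := (hmem_s z).mp hzs
      have hclaim := hfiber_claim z hz z₀ hz₀ (fun k => by
        have hfz : f z = f z₀ := hzb.trans hz₀b.symm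
        exact congrFun hfz k)
      rw [Fintype.mem_piFinset]
      intro i
      rw [Finset.mem_Icc]
      have h := abs_le.mp (hclaim i)
      omega
    refine le_trans (Finset.card_le_card hsubf) ?_
    rw [Fintype.card_piFinset]
    have hc : ∀ i : Fin (d+1), (Finset.Icc (z₀ i - (Mz:ℤ)) (z₀ i + Mz)).card = 2*Mz+1 := by
      intro i
      rw [Int.card_Icc]
      omega
    calc (∏ i : Fin (d+1), (Finset.Icc (z₀ i - (Mz:ℤ)) (z₀ i + Mz)).card)
        = ∏ _i : Fin (d+1), (2*Mz+1) := by
          exact Finset.prod_congr rfl fun i _ => hc i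
      _ = n := by rw [Finset.prod_const, Finset.card_univ, Fintype.card_fin]
      _ ≤ n := le_rfl
  have hmain : s.card ≤ n * (2*NR+1)^a :=
    le_trans (Finset.card_le_mul_card_image s n hfib) (Nat.mul_le_mul_left n hcard_img)
  -- pass to the reals
  rw [hcards]
  have hNRlt : (NR:ℝ) < R*T + 1 := Nat.ceil_lt_add_one (by positivity)
  have h2NR : (2*(NR:ℝ)+1) ≤ 5*(R*T) := by nlinarith
  have hcast : (s.card : ℝ) ≤ (n:ℝ) * (2*(NR:ℝ)+1)^a := by
    have := hmain
    calc (s.card : ℝ) ≤ ((n * (2*NR+1)^a : ℕ) : ℝ) := by exact_mod_cast this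
      _ = (n:ℝ) * (2*(NR:ℝ)+1)^a := by push_cast; ring
  have hpow : (2*(NR:ℝ)+1)^a ≤ (5*(R*T))^a := by
    refine pow_le_pow_left₀ ?_ h2NR a
    positivity
  calc (s.card : ℝ) ≤ (n:ℝ) * (2*(NR:ℝ)+1)^a := hcast
    _ ≤ (n:ℝ) * (5*(R*T))^a := by
        exact mul_le_mul_of_nonneg_left hpow (by positivity)
    _ = (n:ℝ) * (5*R)^a * (T:ℝ)^a := by ring
end

section
/- Let d ≥ 1, R ≥ 1, and let φ : [1,∞) → (0,∞) be a decreasing function with φ(1) ≤ 1. Let A ⊂ ℝ^d be an affine subspace with 1 ≤ a = dim A ≤ d. For an integer T ≥ 1 let ζ_T^{(R)} denote the number of integer points z = (z_0,…,z_d) ∈ ℤ^{d+1} with z_0 = T, max_{1≤j≤d}|z_j| ≤ RT, and dist_∞(z,𝔄) ≤ φ(RT), and let 𝒰_T = {w ∈ A : max_{1≤j≤d}|w_j| ≤ R and there exists such an integer point z with inf_{t∈ℝ} |z − t·(1,w)|_∞ ≤ φ(RT)}. Then there exists a constant C > 0, depending only on d, A and R, such that the a-dimensional Hausdorff measure of 𝒰_T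 satisfies ℋ^a(𝒰_T) ≤ C·ζ_T^{(R)}·(φ(RT)/T)^a for every integer T ≥ 1. -/
open MeasureTheory

/-- The set `𝒰_T ⊆ A` of points close to a rational point counted by `ζ_T^{(R)}`. -/
noncomputable def USet {d : ℕ} (A : AffineSubspace ℝ (Fin d → ℝ))
    (φ : ℝ → ℝ) (R : ℝ) (T : ℕ) : Set (Fin d → ℝ) :=
  {w | w ∈ A ∧ (∀ j : Fin d, |w j| ≤ R) ∧
    ∃ z ∈ ZSet A φ R T,
      (⨅ t : ℝ, ‖(fun i => (z i : ℝ)) - t • lift1 w‖) ≤ φ (R * T)}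

open scoped ENNReal NNReal

lemma ball_inter_bound (d a : ℕ) (A : AffineSubspace ℝ (Fin d → ℝ))
    (ha : Module.finrank ℝ A.direction = a) :
    ∃ C > (0:ℝ), ∀ (c : Fin d → ℝ) (r : ℝ), 0 ≤ r →
      (μH[(a : ℝ)] : Measure (Fin d → ℝ)) ((A : Set (Fin d → ℝ)) ∩ Metric.closedBall c r)
        ≤ ENNReal.ofReal (C * r ^ a) := by
  classical
  rcases (A : Set (Fin d → ℝ)).eq_empty_or_nonempty with hA | ⟨p₀, hp₀⟩
  · exact ⟨1, one_pos, fun c r hr => by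
      simp [hA, le_of_eq, ENNReal.ofReal_pos]⟩
  -- basis of the direction
  have hfd : FiniteDimensional ℝ A.direction := inferInstance
  let b : Module.Basis (Fin a) ℝ A.direction := Module.finBasisOfFinrankEq ℝ A.direction ha
  let ℓ : (Fin a → ℝ) →ₗ[ℝ] (Fin d → ℝ) :=
    A.direction.subtype ∘ₗ (b.equivFun.symm : (Fin a → ℝ) →ₗ[ℝ] A.direction)
  have hinj : Function.Injective ℓ :=
    A.direction.injective_subtype.comp b.equivFun.symm.injective
  obtain ⟨K, hK0, hKanti⟩ := ℓ.exists_antilipschitzWith (LinearMap.ker_eq_bot.mpr hinj)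
  -- Lipschitz constant
  set L : NNReal := ‖(LinearMap.toContinuousLinearMap ℓ)‖₊ + 1 with hL
  have hlip : LipschitzWith L ℓ := by
    have := (LinearMap.toContinuousLinearMap ℓ).lipschitz
    exact this.weaken (by simp [hL])
  refine ⟨(L : ℝ) ^ a * (4 * K) ^ a, by positivity, fun c r hr => ?_⟩
  rcases ((A : Set (Fin d → ℝ)) ∩ Metric.closedBall c r).eq_empty_or_nonempty with h0 | ⟨p, hpA, hpB⟩
  · simp [h0]
  -- parametrize: f x = p₀ + ℓ x, range = A
  set f : (Fin a → ℝ) → (Fin d → ℝ) := fun x => p₀ + ℓ x with hf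
  have hsurj : ∀ w ∈ A, ∃ x, f x = w := by
    intro w hw
    have hmem : w - p₀ ∈ A.direction := AffineSubspace.vsub_mem_direction hw hp₀
    refine ⟨b.equivFun ⟨w - p₀, hmem⟩, ?_⟩
    have hx : ℓ (b.equivFun ⟨w - p₀, hmem⟩) = w - p₀ := by
      simp only [ℓ, LinearMap.coe_comp, Function.comp_apply, LinearEquiv.coe_coe,
        LinearEquiv.symm_apply_apply, Submodule.subtype_apply]
    simp only [hf, hx]
    abel
  obtain ⟨xp, hxp⟩ := hsurj p hpA
  -- covering claim
  have hsub : (A : Set (Fin d → ℝ)) ∩ Metric.closedBall c r ⊆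
      f '' Metric.closedBall xp ((K : ℝ) * (2 * r)) := by
    rintro w ⟨hwA, hwB⟩
    obtain ⟨x, hx⟩ := hsurj w hwA
    refine ⟨x, ?_, hx⟩
    rw [Metric.mem_closedBall]
    have h1 : dist x xp ≤ (K : ℝ) * dist (ℓ x) (ℓ xp) := hKanti.le_mul_dist x xp
    have h2 : dist (ℓ x) (ℓ xp) = dist w p := by
      rw [dist_eq_norm, dist_eq_norm, ← hx, ← hxp]
      have : f x - f xp = ℓ x - ℓ xp := by simp only [hf]; abel
      rw [this]
    have h3 : dist w p ≤ 2 * r :=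
      (dist_triangle w c p).trans (by
        rw [two_mul]
        exact add_le_add hwB (Metric.mem_closedBall.mp (Metric.mem_closedBall'.mp hpB)))
    calc dist x xp ≤ (K : ℝ) * dist w p := by rw [← h2]; exact h1
      _ ≤ (K : ℝ) * (2 * r) := by
          exact mul_le_mul_of_nonneg_left h3 (K.coe_nonneg)
  have hflip : LipschitzWith L f := by
    intro x y
    simpa [hf, edist_add_left] using hlip x y
  calc (μH[(a : ℝ)] : Measure (Fin d → ℝ)) ((A : Set _) ∩ Metric.closedBall c r)
      ≤ μH[(a : ℝ)] (f '' Metric.closedBall xp ((K : ℝ) * (2 * r))) := measure_mono hsub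
    _ ≤ (L : ℝ≥0∞) ^ (a : ℝ) * μH[(a : ℝ)] (Metric.closedBall xp ((K : ℝ) * (2 * r))) :=
        hflip.hausdorffMeasure_image_le (by positivity) _
    _ ≤ ENNReal.ofReal ((L : ℝ) ^ a * (4 * K) ^ a * r ^ a) := by
        have hvol : (μH[(a : ℝ)] : Measure (Fin a → ℝ)) (Metric.closedBall xp ((K : ℝ) * (2 * r)))
            = ENNReal.ofReal ((2 * ((K : ℝ) * (2 * r))) ^ a) := by
          have hcast : (a : ℝ) = (Fintype.card (Fin a) : ℝ) := by simp
          rw [hcast, hausdorffMeasure_pi_real,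
            Real.volume_pi_closedBall _ (by positivity)]
          simp
        rw [hvol]
        have hL' : ((L : ℝ≥0∞) ^ (a : ℝ)) = ENNReal.ofReal ((L : ℝ) ^ a) := by
          rw [ENNReal.rpow_natCast, ← ENNReal.coe_pow, ← ENNReal.ofReal_coe_nnreal,
            NNReal.coe_pow]
        rw [hL', ← ENNReal.ofReal_mul (by positivity)]
        apply ENNReal.ofReal_le_ofReal
        rw [mul_assoc, ← mul_pow, ← mul_pow]
        apply le_of_eq
        ring_nf
theorem measure_of_USet_bound
    (d a : ℕ) (hd : 1 ≤ d) (R : ℝ) (hR : 1 ≤ R)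
    (φ : ℝ → ℝ)
    (hφpos : ∀ T, 1 ≤ T → 0 < φ T)
    (hφanti : ∀ T₁ T₂, 1 ≤ T₁ → T₁ ≤ T₂ → φ T₂ ≤ φ T₁)
    (hφ1 : φ 1 ≤ 1)
    (A : AffineSubspace ℝ (Fin d → ℝ))
    (ha : Module.finrank ℝ A.direction = a)
    (ha1 : 1 ≤ a) (had : a ≤ d) :
    ∃ C > (0:ℝ), ∀ T : ℕ, 1 ≤ T →
      (μH[(a : ℝ)] : Measure (Fin d → ℝ)) (USet A φ R T)
        ≤ ENNReal.ofReal (C * (Nat.card (ZSet A φ R T)) * (φ (R * T) / T) ^ a) := by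
  classical
  obtain ⟨C₀, hC₀, hball⟩ := ball_inter_bound d a A ha
  refine ⟨C₀ * (1 + R) ^ a, by positivity, fun T hT => ?_⟩
  have hT1 : (1:ℝ) ≤ (T:ℝ) := by exact_mod_cast hT
  have hT0 : (0:ℝ) < (T:ℝ) := by linarith
  have hRT : (1:ℝ) ≤ R * T := by nlinarith
  have hφpos' : 0 < φ (R * T) := hφpos _ hRT
  set φ' := φ (R * T) with hφ'
  set r : ℝ := (1 + R) * φ' / T with hrdef
  have hr0 : 0 ≤ r := by positivity
  -- finiteness of ZSet
  have hfin : (ZSet A φ R T).Finite := by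
    set M : ℤ := (T : ℤ) + (Nat.ceil (R * T) : ℤ) with hM
    apply Set.Finite.subset (Set.finite_Icc (fun _ : Fin (d+1) => -M) (fun _ => M))
    rintro z ⟨hz0, hzb, -⟩
    have hM0 : (0:ℤ) ≤ M := by positivity
    have hTM : (T : ℤ) ≤ M := by
      have : (0:ℤ) ≤ (Nat.ceil (R * T) : ℤ) := by positivity
      omega
    have hbd : ∀ j : Fin d, -M ≤ z j.succ ∧ z j.succ ≤ M := by
      intro j
      have h1 : |((z j.succ : ℤ) : ℝ)| ≤ (M : ℝ) := by
        refine (hzb j).trans ?_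
        have h2 : R * T ≤ (Nat.ceil (R * T) : ℝ) := Nat.le_ceil _
        have h3 : (0:ℝ) ≤ (T:ℝ) := hT0.le
        push_cast [hM]
        linarith
      have h4 : |z j.succ| ≤ M := by rwa [← Int.cast_abs, Int.cast_le] at h1
      constructor <;> [linarith [neg_abs_le (z j.succ)]; linarith [le_abs_self (z j.succ)]]
    rw [Set.mem_Icc]
    constructor
    · intro i
      induction i using Fin.cases with
      | zero => simp only [hz0]; omega
      | succ j => exact (hbd j).1
    · intro i
      induction i using Fin.cases with
      | zero => simp only [hz0]; omega
      | succ j => exact (hbd j).2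
  set F := hfin.toFinset with hF
  set cz : (Fin (d+1) → ℤ) → (Fin d → ℝ) := fun z j => (z j.succ : ℝ) / T with hcz
  -- covering
  have hcover : USet A φ R T ⊆
      ⋃ z ∈ F, ((A : Set (Fin d → ℝ)) ∩ Metric.closedBall (cz z) r) := by
    rintro w ⟨hwA, hwR, z, hz, hinf⟩
    refine Set.mem_biUnion (hfin.mem_toFinset.mpr hz) ⟨hwA, ?_⟩
    rw [Metric.mem_closedBall]
    rw [dist_pi_le_iff hr0]
    intro j
    have hz0 : z 0 = (T : ℤ) := hz.1
    -- key estimate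
    have key : |(z j.succ : ℝ) - T * w j| ≤ (1 + R) * φ' := by
      refine le_of_forall_pos_le_add fun ε hε => ?_
      set δ : ℝ := ε / (1 + R) with hδdef
      have hδ : 0 < δ := by positivity
      have hlt : (⨅ t : ℝ, ‖(fun i => (z i : ℝ)) - t • lift1 w‖) < φ' + δ :=
        lt_of_le_of_lt hinf (by linarith)
      obtain ⟨t, ht⟩ := exists_lt_of_ciInf_lt hlt
      set v : Fin (d+1) → ℝ := (fun i => (z i : ℝ)) - t • lift1 w with hv
      have h0 : |(T:ℝ) - t| < φ' + δ := by
        have h := (norm_le_pi_norm v 0).trans_lt ht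
        have hv0 : v 0 = (T : ℝ) - t := by
          simp [hv, lift1, hz0, Fin.cons_zero]
        rwa [hv0, Real.norm_eq_abs] at h
      have hj : |(z j.succ : ℝ) - t * w j| < φ' + δ := by
        have h := (norm_le_pi_norm v j.succ).trans_lt ht
        have hvj : v j.succ = (z j.succ : ℝ) - t * w j := by
          simp [hv, lift1, Fin.cons_succ]
        rwa [hvj, Real.norm_eq_abs] at h
      have habs : |(z j.succ : ℝ) - T * w j| ≤
          |(z j.succ : ℝ) - t * w j| + |(T:ℝ) - t| * |w j| := by
        have heq : (z j.succ : ℝ) - T * w j =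
            ((z j.succ : ℝ) - t * w j) + ((t:ℝ) - T) * w j := by ring
        rw [heq]
        refine (abs_add_le _ _).trans ?_
        rw [abs_mul, abs_sub_comm t T]
      have hδε : ((φ' + δ)) * (1 + R) = (1 + R) * φ' + ε := by
        rw [hδdef, add_mul, div_mul_cancel₀ _ (by linarith : (1 + R) ≠ 0)]
        ring
      have hRj : |w j| ≤ R := hwR j
      calc |(z j.succ : ℝ) - T * w j|
          ≤ |(z j.succ : ℝ) - t * w j| + |(T:ℝ) - t| * |w j| := habs
        _ ≤ (φ' + δ) + (φ' + δ) * R := by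
            refine add_le_add hj.le (mul_le_mul h0.le hRj (abs_nonneg _) (by linarith))
        _ = (1 + R) * φ' + ε := by rw [← hδε]; ring
    have hdist : dist (w j) (cz z j) = |(z j.succ : ℝ) - T * w j| / T := by
      rw [Real.dist_eq, hcz]
      rw [abs_sub_comm]
      rw [← abs_of_pos hT0, ← abs_div]
      congr 1
      field_simp
      rw [abs_of_pos hT0]; ring
    rw [hdist, hrdef]
    gcongr
  -- assemble
  have hcard : F.card = Nat.card ↥(ZSet A φ R T) := by
    rw [Nat.card_coe_set_eq, Set.ncard_eq_toFinset_card _ hfin]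
  calc (μH[(a : ℝ)] : Measure (Fin d → ℝ)) (USet A φ R T)
      ≤ (μH[(a : ℝ)] : Measure (Fin d → ℝ)) (⋃ z ∈ F, ((A : Set _) ∩ Metric.closedBall (cz z) r)) :=
        measure_mono hcover
    _ ≤ ∑ z ∈ F, (μH[(a : ℝ)] : Measure (Fin d → ℝ)) ((A : Set _) ∩ Metric.closedBall (cz z) r) :=
        measure_biUnion_finset_le F _
    _ ≤ ∑ z ∈ F, ENNReal.ofReal (C₀ * r ^ a) :=
        Finset.sum_le_sum fun z _ => hball (cz z) r hr0
    _ = (F.card : ℝ≥0∞) * ENNReal.ofReal (C₀ * r ^ a) := by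
        rw [Finset.sum_const, nsmul_eq_mul]
    _ ≤ ENNReal.ofReal (C₀ * (1 + R) ^ a * (Nat.card (ZSet A φ R T)) * (φ' / T) ^ a) := by
        rw [← ENNReal.ofReal_natCast, ← ENNReal.ofReal_mul (by positivity)]
        apply ENNReal.ofReal_le_ofReal
        rw [hrdef]
        have : ((1 + R) * φ' / T) ^ a = (1 + R) ^ a * (φ' / T) ^ a := by
          rw [mul_div_assoc, mul_pow]
        rw [this, hcard]
        ring_nf
        exact le_of_eq (by ring)
end
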